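/- For any distinct x, y ∈ (0,1] and upsets α with threshold (infimum) x and β with threshold y, the α-preservation and β-preservation consequence relations are incomparable: there is an argument valid in one but not the other, and vice versa. -/

import Mathlib

/-- Propositional formulas: atoms, negation, disjunction. -/
inductive Fml : Type
  | atom : ℕ → Fml
  | neg : Fml → Fml
  | or : Fml → Fml → Fml
deriving DecidableEq

namespace Fml

def and (φ ψ : Fml) : Fml := neg (or (neg φ) (neg ψ))

def bot : Fml := and (atom 0) (neg (atom 0))

def imp (φ ψ : Fml) : Fml := or (neg φ) ψ

def eval (v : ℕ → Bool) : Fml → Bool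
  | atom n => v n
  | neg φ => !(eval v φ)
  | or φ ψ => (eval v φ) || (eval v ψ)

end Fml

/-- Two formulas are jointly classically unsatisfiable. -/
def Incompatible (φ ψ : Fml) : Prop :=
  ∀ v : ℕ → Bool, ¬(φ.eval v = true ∧ ψ.eval v = true)

/-- Classical (Set-Set) validity. -/
def ClValid (Γ Δ : Finset Fml) : Prop :=
  ∀ v : ℕ → Bool, (∀ γ ∈ Γ, γ.eval v = true) → ∃ δ ∈ Δ, δ.eval v = true

/-- Classical single-conclusion entailment. -/
def ClEntails (Γ : Finset Fml) (φ : Fml) : Prop :=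
  ∀ v : ℕ → Bool, (∀ γ ∈ Γ, γ.eval v = true) → φ.eval v = true

def ClConsistent (Γ : Finset Fml) : Prop :=
  ∃ v : ℕ → Bool, ∀ γ ∈ Γ, γ.eval v = true

def Tautology (φ : Fml) : Prop := ∀ v : ℕ → Bool, φ.eval v = true

/-- A probability distribution on formulas. -/
structure ProbDist where
  p : Fml → ℝ
  nonneg : ∀ φ, 0 ≤ p φ
  le_one : ∀ φ, p φ ≤ 1
  bot_eq : p Fml.bot = 0
  neg_eq : ∀ φ, p (Fml.neg φ) = 1 - p φ
  add_eq : ∀ φ ψ, Incompatible φ ψ → p (Fml.or φ ψ) = p φ + p ψ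

/-- A probabilistic model: worlds with classical valuations and a finitely
additive probability measure on subsets of worlds. -/
structure PModel where
  W : Type
  nonempty : Nonempty W
  val : W → ℕ → Bool
  μ : Set W → ℝ
  nonneg : ∀ A : Set W, 0 ≤ μ A
  empty_eq : μ (∅ : Set W) = 0
  univ_eq : μ (Set.univ : Set W) = 1
  add_eq : ∀ A B : Set W, Disjoint A B → μ (A ∪ B) = μ A + μ B

/-- Denotation of a formula in a model. -/
def PModel.den (M : PModel) (φ : Fml) : Set M.W := {w | φ.eval (M.val w) = true}

/-- Induced probability of a formula in a model. -/
def PModel.prob (M : PModel) (φ : Fml) : ℝ := M.μ (M.den φ)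

/-- An upset of [0,1]: contains 1, excludes 0, upward closed within [0,1]. -/
def IsUpset (α : Set ℝ) : Prop :=
  α ⊆ Set.Icc 0 1 ∧ (1 : ℝ) ∈ α ∧ (0 : ℝ) ∉ α ∧
    ∀ x ∈ α, ∀ y ∈ Set.Icc (0:ℝ) 1, x ≤ y → y ∈ α

/-- The mirror image of α. -/
def mirror (α : Set ℝ) : Set ℝ := {x ∈ Set.Icc (0:ℝ) 1 | 1 - x ∈ α}

/-- The dual of α. -/
def dual (α : Set ℝ) : Set ℝ := Set.Icc (0:ℝ) 1 \ mirror α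

/-- Conjunction of a finite set of formulas. -/
noncomputable def conj (Γ : Finset Fml) : Fml := Γ.toList.foldr Fml.and (Fml.neg Fml.bot)

/-- Disjunction of a finite set of formulas. -/
noncomputable def disj (Δ : Finset Fml) : Fml := Δ.toList.foldr Fml.or Fml.bot

/-- Disjunction of a list of formulas. -/
def disjList (l : List Fml) : Fml := l.foldr Fml.or Fml.bot

/-- α-preservation validity (over probability distributions). -/
def PresValid (α : Set ℝ) (Γ Δ : Finset Fml) : Prop :=
  ∀ P : ProbDist, (∀ γ ∈ Γ, P.p γ ∈ α) → ∃ δ ∈ Δ, P.p δ ∈ α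

/-- α-preservation validity (over probabilistic models). -/
def PresValidM (α : Set ℝ) (Γ Δ : Finset Fml) : Prop :=
  ∀ M : PModel, (∀ γ ∈ Γ, M.prob γ ∈ α) → ∃ δ ∈ Δ, M.prob δ ∈ α

/-- α-symmetric validity. -/
def SymValid (α : Set ℝ) (Γ Δ : Finset Fml) : Prop :=
  ∀ P : ProbDist, (∀ γ ∈ Γ, P.p γ ∈ α) → ∃ δ ∈ Δ, P.p δ ∉ mirror α

/-- α-satisfiability of a finite set of formulas. -/
def Satis (α : Set ℝ) (Γ : Finset Fml) : Prop :=
  ∃ P : ProbDist, ∀ γ ∈ Γ, P.p γ ∈ α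

-- helpers
lemma eval_and (v : ℕ → Bool) (φ ψ : Fml) :
    (Fml.and φ ψ).eval v = ((φ.eval v) && (ψ.eval v)) := by
  simp [Fml.and, Fml.eval]

lemma eval_bot (v : ℕ → Bool) : Fml.bot.eval v = false := by
  simp [Fml.bot, eval_and, Fml.eval]

lemma eval_disjList (v : ℕ → Bool) (l : List Fml) :
    (disjList l).eval v = l.any (fun φ => φ.eval v) := by
  induction l with
  | nil => simp [disjList, eval_bot]
  | cons a l ih => simp [disjList, Fml.eval] at ih ⊢; rw [ih]

lemma ProbDist.mono (P : ProbDist) {φ ψ : Fml}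
    (h : ∀ v, φ.eval v = true → ψ.eval v = true) : P.p φ ≤ P.p ψ := by
  have hinc : Incompatible φ (Fml.neg ψ) := by
    intro v ⟨h1, h2⟩
    simp [Fml.eval, h v h1] at h2
  have := P.add_eq φ (Fml.neg ψ) hinc
  have hle := P.le_one (Fml.or φ (Fml.neg ψ))
  rw [this, P.neg_eq] at hle
  linarith

lemma ProbDist.p_unsat (P : ProbDist) {φ : Fml} (h : ∀ v, φ.eval v = false) :
    P.p φ = 0 := by
  have h1 : P.p φ ≤ P.p Fml.bot := P.mono (fun v hv => by rw [h v] at hv; exact absurd hv (by simp))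
  have := P.nonneg φ
  rw [P.bot_eq] at h1
  linarith

lemma ProbDist.p_taut (P : ProbDist) {φ : Fml} (h : ∀ v, φ.eval v = true) :
    P.p φ = 1 := by
  have h1 : P.p (Fml.neg φ) = 0 := P.p_unsat (fun v => by simp [Fml.eval, h v])
  have := P.neg_eq φ
  rw [h1] at this
  linarith

lemma ProbDist.p_disjList (P : ProbDist) (l : List Fml)
    (h : l.Pairwise Incompatible) : P.p (disjList l) = (l.map P.p).sum := by
  induction l with
  | nil => simpa [disjList] using P.bot_eq
  | cons a l ih =>
    rcases List.pairwise_cons.mp h with ⟨ha, hl⟩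
    have hinc : Incompatible a (disjList l) := by
      intro v ⟨h1, h2⟩
      rw [eval_disjList] at h2
      rcases List.any_eq_true.mp h2 with ⟨b, hb, hbe⟩
      exact ha b hb v ⟨h1, hbe⟩
    show P.p (Fml.or a (disjList l)) = _
    rw [P.add_eq _ _ hinc, ih hl]
    simp

-- cells
def cell : ℕ → ℕ → Fml
  | 0, _ => Fml.neg Fml.bot
  | k+1, j => Fml.and (cell k j) (if j.testBit k then Fml.atom k else Fml.neg (Fml.atom k))

lemma eval_cell (v : ℕ → Bool) (k j : ℕ) :
    (cell k j).eval v = decide (∀ i < k, v i = j.testBit i) := by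
  induction k with
  | zero => simp [cell, Fml.eval, eval_bot]
  | succ k ih =>
    rw [cell, eval_and, ih]
    have h2 : (if j.testBit k then Fml.atom k else Fml.neg (Fml.atom k)).eval v
        = (v k == j.testBit k) := by
      rcases htb : j.testBit k with _|_ <;> rcases hv : v k with _|_ <;>
        simp [Fml.eval, htb, hv]
    rw [h2, Bool.eq_iff_iff]
    simp only [Bool.and_eq_true, decide_eq_true_eq, beq_iff_eq]
    constructor
    · rintro ⟨hall, hk⟩ i hi
      rcases Nat.lt_succ_iff_lt_or_eq.mp hi with h|rfl
      · exact hall i h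
      · exact hk
    · intro hall
      exact ⟨fun i hi => hall i (by omega), hall k (by omega)⟩

lemma cell_incompat {k j j' : ℕ} (hj : j < 2^k) (hj' : j' < 2^k) (hne : j ≠ j') :
    Incompatible (cell k j) (cell k j') := by
  intro v ⟨h1, h2⟩
  rw [eval_cell, decide_eq_true_iff] at h1 h2
  apply hne
  apply Nat.eq_of_testBit_eq
  intro i
  by_cases hik : i < k
  · rw [← h1 i hik, ← h2 i hik]
  · rw [Nat.testBit_lt_two_pow (lt_of_lt_of_le hj (Nat.pow_le_pow_right (by omega) (by omega))),
      Nat.testBit_lt_two_pow (lt_of_lt_of_le hj' (Nat.pow_le_pow_right (by omega) (by omega)))]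

-- index of a valuation
def idx (v : ℕ → Bool) : ℕ → ℕ
  | 0 => 0
  | k+1 => idx v k + (if v k then 2^k else 0)

lemma idx_lt (v : ℕ → Bool) (k : ℕ) : idx v k < 2^k := by
  induction k with
  | zero => simp [idx]
  | succ k ih =>
    rw [idx]
    have : 2^(k+1) = 2^k + 2^k := by ring
    split <;> omega

lemma testBit_idx (v : ℕ → Bool) {i k : ℕ} (hik : i < k) :
    (idx v k).testBit i = v i := by
  induction k with
  | zero => omega
  | succ k ih =>
    rw [idx]
    rcases Nat.lt_succ_iff_lt_or_eq.mp hik with h | rfl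
    · rcases hvk : v k with _ | _
      · simpa using ih h
      · simp only [if_true]
        rw [Nat.add_comm, Nat.testBit_two_pow_add_gt h]
        exact ih h
    · rcases hvk : v i with _ | _
      · simpa using Nat.testBit_lt_two_pow (idx_lt v i)
      · simp only [if_true]
        rw [Nat.add_comm, Nat.testBit_two_pow_add_eq,
          Nat.testBit_lt_two_pow (idx_lt v i)]
        rfl

lemma eval_cell_idx (v : ℕ → Bool) (k : ℕ) : (cell k (idx v k)).eval v = true := by
  rw [eval_cell, decide_eq_true_iff]
  intro i hi
  rw [testBit_idx v hi]

lemma eval_cell_canon {k j j' : ℕ} (hj : j < 2^k) (hj' : j' < 2^k) :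
    (cell k j').eval (fun i => j.testBit i) = decide (j = j') := by
  rw [eval_cell, decide_eq_decide]
  constructor
  · intro hall
    apply Nat.eq_of_testBit_eq
    intro i
    by_cases hik : i < k
    · exact hall i hik
    · rw [Nat.testBit_lt_two_pow (lt_of_lt_of_le hj (Nat.pow_le_pow_right (by omega) (by omega))),
        Nat.testBit_lt_two_pow (lt_of_lt_of_le hj' (Nat.pow_le_pow_right (by omega) (by omega)))]
  · rintro rfl i hi
    rfl

lemma sum_shift (n : ℕ) (hn : 0 < n) (c : ℕ) (f : ℕ → ℝ) :
    ∑ t ∈ Finset.range n, f ((c + t) % n) = ∑ t ∈ Finset.range n, f t := by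
  apply Finset.sum_nbij' (i := fun t => (c + t) % n) (j := fun d => (n - c % n + d) % n)
  · intro a ha
    exact Finset.mem_range.mpr (Nat.mod_lt _ hn)
  · intro a ha
    exact Finset.mem_range.mpr (Nat.mod_lt _ hn)
  · intro a ha
    rw [Finset.mem_range] at ha
    rw [Nat.add_mod_mod]
    have key : n - c % n + (c + a) = n * (c / n + 1) + a := by
      have := Nat.mod_add_div c n
      have := Nat.mod_lt c hn
      have h2 : n * (c / n + 1) = n * (c / n) + n := by ring
      omega
    rw [key, Nat.mul_add_mod, Nat.mod_eq_of_lt ha]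
  · intro a ha
    rw [Finset.mem_range] at ha
    rw [Nat.add_mod_mod]
    have key : c + (n - c % n + a) = n * (c / n + 1) + a := by
      have := Nat.mod_add_div c n
      have := Nat.mod_lt c hn
      have h2 : n * (c / n + 1) = n * (c / n) + n := by ring
      omega
    rw [key, Nat.mul_add_mod, Nat.mod_eq_of_lt ha]
  · intro a ha
    rfl

lemma sum_count (n m : ℕ) (hn : 0 < n) (hm : m ≤ n) (c : ℕ) (x : ℝ) :
    ∑ t ∈ Finset.range n, (if (c + t) % n < m then x else 0) = m * x := by
  rw [sum_shift n hn c (fun t => if t < m then x else 0)]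
  rw [← Finset.sum_subset (Finset.range_subset_range.mpr hm) (by intro t ht hnt; simp only [Finset.mem_range] at ht hnt; rw [if_neg (by omega)])]
  rw [Finset.sum_congr rfl (fun t ht => if_pos (Finset.mem_range.mp ht))]
  simp [mul_comm]


lemma list_sum_range (f : ℕ → ℝ) (n : ℕ) :
    ((List.range n).map f).sum = ∑ i ∈ Finset.range n, f i := by
  induction n with
  | zero => simp
  | succ n ih => rw [List.range_succ, Finset.sum_range_succ, ← ih]; simp

noncomputable def unif (k : ℕ) : ProbDist where
  p φ := (∑ j ∈ Finset.range (2^k), (if φ.eval (fun i => j.testBit i) then (1:ℝ) else 0)) / 2^k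
  nonneg φ := by positivity
  le_one φ := by
    rw [div_le_one (by positivity)]
    calc ∑ j ∈ Finset.range (2^k), (if φ.eval (fun i => j.testBit i) then (1:ℝ) else 0)
        ≤ ∑ _j ∈ Finset.range (2^k), (1:ℝ) := by
          apply Finset.sum_le_sum; intro j _; split <;> norm_num
      _ = 2^k := by simp
  bot_eq := by simp [eval_bot]
  neg_eq φ := by
    have hpt : ∀ j : ℕ, (if (Fml.neg φ).eval (fun i => j.testBit i) then (1:ℝ) else 0)
        = 1 - (if φ.eval (fun i => j.testBit i) then (1:ℝ) else 0) := by
      intro j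
      rcases h : φ.eval (fun i => j.testBit i) <;> simp [Fml.eval, h]
    rw [Finset.sum_congr rfl (fun j _ => hpt j), Finset.sum_sub_distrib]
    have h2 : (0:ℝ) < 2^k := by positivity
    field_simp
    simp
  add_eq φ ψ h := by
    have hpt : ∀ j : ℕ, (if (Fml.or φ ψ).eval (fun i => j.testBit i) then (1:ℝ) else 0)
        = (if φ.eval (fun i => j.testBit i) then (1:ℝ) else 0)
          + (if ψ.eval (fun i => j.testBit i) then (1:ℝ) else 0) := by
      intro j
      have := h (fun i => j.testBit i)
      rcases h1 : φ.eval (fun i => j.testBit i) <;> rcases h2 : ψ.eval (fun i => j.testBit i) <;>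
        simp [Fml.eval, h1, h2] at this ⊢
    rw [Finset.sum_congr rfl (fun j _ => hpt j), Finset.sum_add_distrib, add_div]

/-- The cyclic disjunctions of cells. -/
def phi (k m i : ℕ) : Fml :=
  disjList ((List.range (2^k)).map
    (fun j => if (i + j) % 2^k < m then cell k j else Fml.bot))

lemma bot_incompat_left (ψ : Fml) : Incompatible Fml.bot ψ := by
  intro v ⟨h1, _⟩; rw [eval_bot] at h1; exact absurd h1 (by simp)

lemma bot_incompat_right (ψ : Fml) : Incompatible ψ Fml.bot := by
  intro v ⟨_, h1⟩; rw [eval_bot] at h1; exact absurd h1 (by simp)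

lemma phi_pairwise (k m i : ℕ) :
    List.Pairwise Incompatible ((List.range (2^k)).map
      (fun j => if (i + j) % 2^k < m then cell k j else Fml.bot)) := by
  rw [List.pairwise_map]
  apply List.Pairwise.imp_of_mem (R := fun a b => a ≠ b)
  · intro a b ha hb hne
    rw [List.mem_range] at ha hb
    by_cases c1 : (i + a) % 2^k < m <;> by_cases c2 : (i + b) % 2^k < m <;>
      simp only [c1, c2, if_true, if_false, if_pos, if_neg]
    · exact cell_incompat ha hb hne
    · exact bot_incompat_right _
    · exact bot_incompat_left _
    · exact bot_incompat_left _
  · exact (List.nodup_range)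

lemma p_phi (P : ProbDist) (k m i : ℕ) :
    P.p (phi k m i) = ∑ j ∈ Finset.range (2^k),
      (if (i + j) % 2^k < m then P.p (cell k j) else 0) := by
  rw [phi, P.p_disjList _ (phi_pairwise k m i), List.map_map, list_sum_range]
  apply Finset.sum_congr rfl
  intro j _
  simp only [Function.comp]
  split
  · rfl
  · exact P.bot_eq

lemma sum_cells (P : ProbDist) (k : ℕ) :
    ∑ j ∈ Finset.range (2^k), P.p (cell k j) = 1 := by
  have htaut : ∀ v, (disjList ((List.range (2^k)).map (cell k))).eval v = true := by
    intro v
    rw [eval_disjList, List.any_eq_true]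
    refine ⟨cell k (idx v k), List.mem_map.mpr ⟨idx v k, List.mem_range.mpr (idx_lt v k), rfl⟩,
      eval_cell_idx v k⟩
  have hpw : List.Pairwise Incompatible ((List.range (2^k)).map (cell k)) := by
    rw [List.pairwise_map]
    apply List.Pairwise.imp_of_mem (R := fun a b => a ≠ b)
    · intro a b ha hb hne
      rw [List.mem_range] at ha hb
      exact cell_incompat ha hb hne
    · exact List.nodup_range
  have := P.p_disjList _ hpw
  rw [P.p_taut htaut, List.map_map, list_sum_range] at this
  exact this.symm

lemma sum_phi (P : ProbDist) (k m : ℕ) (hm : m ≤ 2^k) :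
    ∑ i ∈ Finset.range (2^k), P.p (phi k m i) = m := by
  have hn : 0 < 2^k := Nat.pow_pos (by omega)
  rw [Finset.sum_congr rfl (fun i _ => p_phi P k m i), Finset.sum_comm]
  have hcnt : ∀ j ∈ Finset.range (2^k),
      ∑ i ∈ Finset.range (2^k), (if (i + j) % 2^k < m then P.p (cell k j) else 0)
        = m * P.p (cell k j) := by
    intro j _
    rw [Finset.sum_congr rfl (fun i _ => by rw [Nat.add_comm i j])]
    exact sum_count (2^k) m hn hm j (P.p (cell k j))
  rw [Finset.sum_congr rfl hcnt, ← Finset.mul_sum, sum_cells]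
  simp

lemma exists_phi_le (P : ProbDist) (k m : ℕ) (hm : m ≤ 2^k) :
    ∃ i < 2^k, P.p (phi k m i) ≤ (m : ℝ) / 2^k := by
  by_contra hc
  push_neg at hc
  have hn : 0 < 2^k := Nat.pow_pos (by omega)
  have hlt : (m : ℝ) < ∑ i ∈ Finset.range (2^k), P.p (phi k m i) := by
    calc (m : ℝ) = ∑ _i ∈ Finset.range (2^k), (m : ℝ) / 2^k := by
          rw [Finset.sum_const, Finset.card_range, nsmul_eq_mul]
          field_simp
          push_cast; ring
      _ < ∑ i ∈ Finset.range (2^k), P.p (phi k m i) := by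
          apply Finset.sum_lt_sum_of_nonempty (Finset.nonempty_range_iff.mpr (by omega))
          intro i hi
          exact hc i (Finset.mem_range.mp hi)
  rw [sum_phi P k m hm] at hlt
  exact absurd hlt (by simp)

lemma unif_phi (k m i : ℕ) (hm : m ≤ 2^k) :
    (unif k).p (phi k m i) = (m : ℝ) / 2^k := by
  have hn : 0 < 2^k := Nat.pow_pos (by omega)
  show (∑ j ∈ Finset.range (2^k),
      (if (phi k m i).eval (fun t => j.testBit t) then (1:ℝ) else 0)) / 2^k = _
  have heval : ∀ j < 2^k, (phi k m i).eval (fun t => j.testBit t)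
      = decide ((i + j) % 2^k < m) := by
    intro j hj
    rw [phi, eval_disjList, Bool.eq_iff_iff, List.any_eq_true, decide_eq_true_eq]
    constructor
    · rintro ⟨b, hb, hbe⟩
      rcases List.mem_map.mp hb with ⟨j', hj', rfl⟩
      rw [List.mem_range] at hj'
      by_cases hcond : (i + j') % 2^k < m
      · rw [if_pos hcond, eval_cell_canon hj hj', decide_eq_true_eq] at hbe
        rw [hbe]; exact hcond
      · rw [if_neg hcond, eval_bot] at hbe
        exact absurd hbe (by simp)
    · intro hcond
      refine ⟨if (i + j) % 2^k < m then cell k j else Fml.bot,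
        List.mem_map.mpr ⟨j, List.mem_range.mpr hj, rfl⟩, ?_⟩
      rw [if_pos hcond, eval_cell_canon hj hj]
      simp
  rw [Finset.sum_congr rfl (fun j hj => by rw [heval j (Finset.mem_range.mp hj)])]
  simp only [decide_eq_true_eq]
  rw [sum_count (2^k) m hn hm i 1]
  simp


lemma upset_mem {α : Set ℝ} {x : ℝ} (hα : IsUpset α) (hxa : sInf α = x)
    {t : ℝ} (h1 : x < t) (h2 : t ≤ 1) : t ∈ α := by
  obtain ⟨hsub, h1a, _, hup⟩ := hα
  have hne : α.Nonempty := ⟨1, h1a⟩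
  have hlt : sInf α < t := by rw [hxa]; exact h1
  obtain ⟨a, ha, hat⟩ := exists_lt_of_csInf_lt hne hlt
  exact hup a ha t ⟨le_trans (hsub ha).1 hat.le, h2⟩ hat.le

lemma upset_not_mem {α : Set ℝ} {x : ℝ} (hα : IsUpset α) (hxa : sInf α = x)
    {t : ℝ} (h : t < x) : t ∉ α := by
  intro ht
  obtain ⟨hsub, _, _, _⟩ := hα
  have hbdd : BddBelow α := ⟨0, fun a ha => (hsub ha).1⟩
  have := csInf_le hbdd ht
  rw [hxa] at this
  linarith

lemma exists_dyadic {x y : ℝ} (h0 : 0 < x) (hxy : x < y) (hy1 : y ≤ 1) :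
    ∃ k m : ℕ, 0 < m ∧ m < 2^k ∧ x < (m : ℝ) / 2^k ∧ (m : ℝ) / 2^k < y := by
  obtain ⟨k, hk⟩ := pow_unbounded_of_one_lt ((y - x)⁻¹) (by norm_num : (1:ℝ) < 2)
  have hN : (0:ℝ) < 2^k := by positivity
  have hgap : 1 < (y - x) * 2^k := by
    have hyx : (0:ℝ) < y - x := by linarith
    calc (1:ℝ) = (y-x) * (y-x)⁻¹ := (mul_inv_cancel₀ (ne_of_gt hyx)).symm
      _ < (y-x) * 2^k := mul_lt_mul_of_pos_left hk hyx
  set m : ℕ := ⌊x * 2^k⌋₊ + 1 with hm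
  have hxN : 0 ≤ x * 2^k := by positivity
  have hfl : (⌊x * 2^k⌋₊ : ℝ) ≤ x * 2^k := Nat.floor_le hxN
  have hfl2 : x * 2^k < (⌊x * 2^k⌋₊ : ℝ) + 1 := Nat.lt_floor_add_one _
  have hmr : (m : ℝ) = (⌊x * 2^k⌋₊ : ℝ) + 1 := by push_cast [hm]; ring
  have h1 : x < (m : ℝ) / 2^k := by
    rw [lt_div_iff₀ hN, hmr]; linarith
  have h2 : (m : ℝ) / 2^k < y := by
    rw [div_lt_iff₀ hN, hmr]; nlinarith
  have h3 : m < 2^k := by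
    have : (m : ℝ) < 2^k := by
      have := mul_lt_mul_of_pos_right (show (m:ℝ)/2^k < 1 by linarith) hN
      rw [div_mul_cancel₀] at this <;> [skip; positivity]
      linarith
    exact_mod_cast (by push_cast at this ⊢; exact this : (m:ℝ) < ((2^k : ℕ) : ℝ)) |> Nat.cast_lt.mp
  exact ⟨k, m, by omega, h3, h1, h2⟩

lemma bothdirs (x y : ℝ) (hx : x ∈ Set.Ioc (0:ℝ) 1) (hy : y ∈ Set.Ioc (0:ℝ) 1)
    (hlt : x < y) (α β : Set ℝ) (hα : IsUpset α) (hβ : IsUpset β)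
    (hxa : sInf α = x) (hyb : sInf β = y) :
    (∃ Γ Δ : Finset Fml, PresValid α Γ Δ ∧ ¬ PresValid β Γ Δ) ∧
    (∃ Γ Δ : Finset Fml, PresValid β Γ Δ ∧ ¬ PresValid α Γ Δ) := by
  obtain ⟨k, m, hm0, hmk, hq1, hq2⟩ := exists_dyadic hx.1 hlt hy.2
  have hN : (0:ℝ) < 2^k := by positivity
  have hcastsub : (((2^k - m : ℕ)) : ℝ) = 2^k - m := by
    push_cast [Nat.cast_sub hmk.le]; ring
  have hnegval : ∀ P : ProbDist, ∀ i : ℕ,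
      P.p (Fml.neg (phi k (2^k - m) i)) = 1 - P.p (phi k (2^k - m) i) :=
    fun P i => P.neg_eq _
  constructor
  · -- valid in α, not in β : argument (∅, Δ)
    refine ⟨∅, (Finset.range (2^k)).image (fun i => Fml.neg (phi k (2^k - m) i)), ?_, ?_⟩
    · intro P _
      obtain ⟨i, hi, hle⟩ := exists_phi_le P k (2^k - m) (by omega)
      refine ⟨Fml.neg (phi k (2^k - m) i),
        Finset.mem_image.mpr ⟨i, Finset.mem_range.mpr hi, rfl⟩, ?_⟩
      rw [hnegval]
      apply upset_mem hα hxa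
      · rw [hcastsub] at hle
        have hone : ((2:ℝ)^k - m)/2^k + (m:ℝ)/2^k = 1 := by field_simp; ring
        linarith
      · have := P.nonneg (phi k (2^k - m) i)
        linarith
    · intro hval
      obtain ⟨δ, hδ, hmem⟩ := hval (unif k) (by intro γ hγ; exact absurd hγ (by simp))
      obtain ⟨i, hi, rfl⟩ := Finset.mem_image.mp hδ
      rw [hnegval, unif_phi k (2^k - m) i (by omega), hcastsub] at hmem
      have hval' : 1 - ((2:ℝ)^k - m)/2^k = (m:ℝ)/2^k := by field_simp; ring
      rw [hval'] at hmem
      exact upset_not_mem hβ hyb hq2 hmem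
  · -- valid in β, not in α : argument (Γ, ∅)
    refine ⟨(Finset.range (2^k)).image (phi k m), ∅, ?_, ?_⟩
    · intro P hP
      exfalso
      obtain ⟨i, hi, hle⟩ := exists_phi_le P k m hmk.le
      have hmem := hP (phi k m i) (Finset.mem_image.mpr ⟨i, Finset.mem_range.mpr hi, rfl⟩)
      exact upset_not_mem hβ hyb (lt_of_le_of_lt hle hq2) hmem
    · intro hval
      obtain ⟨δ, hδ, _⟩ := hval (unif k) (by
        intro γ hγ
        obtain ⟨i, hi, rfl⟩ := Finset.mem_image.mp hγ
        rw [unif_phi k m i hmk.le]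
        exact upset_mem hα hxa hq1 (le_of_lt (lt_of_lt_of_le hq2 hy.2)))
      exact absurd hδ (by simp)

/-- upsets with distinct thresholds determine incomparable
preservation consequence relations. -/
theorem stmt14 (x y : ℝ) (hx : x ∈ Set.Ioc (0:ℝ) 1) (hy : y ∈ Set.Ioc (0:ℝ) 1)
    (hxy : x ≠ y) (α β : Set ℝ) (hα : IsUpset α) (hβ : IsUpset β)
    (hxa : sInf α = x) (hyb : sInf β = y) :
    (∃ Γ Δ : Finset Fml, PresValid α Γ Δ ∧ ¬ PresValid β Γ Δ) ∧
    (∃ Γ Δ : Finset Fml, PresValid β Γ Δ ∧ ¬ PresValid α Γ Δ) := by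
  rcases lt_or_gt_of_ne hxy with hlt | hlt
  · exact bothdirs x y hx hy hlt α β hα hβ hxa hyb
  · obtain ⟨h1, h2⟩ := bothdirs y x hy hx hlt β α hβ hα hyb hxa
    exact ⟨h2, h1⟩
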